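/- Improved dispersion via exponentially weighted enstrophy (second step of Appendix C): let σ ∈ (0,1], q > 1, c > 0, μ ∈ (0,1], C > 0, B > 0. Suppose D : [0,∞) → (0,∞) is differentiable and g : [0,∞) → [0,∞) is continuous with D′(t) ≤ C g(t) D(t)^{1−σ} for all t ≥ 0 and ∫₀ᵗ e^{c τ^{μ}} g(τ)^{q} dτ ≤ B (1 + t^{μ}) for all t ≥ 0. Then there exists a constant C′ > 0 such that D(t) ≤ C′ (1+t)^{μ/(qσ)} for all t ≥ 0. -/

import Mathlib

open Real Set intervalIntegral Nat

private lemma aux_pow_div_factorial_le_exp {x : ℝ} (hx : 0 ≤ x) (n : ℕ) :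
    x ^ n / (n ! : ℝ) ≤ Real.exp x := by
  refine le_trans ?_ (Real.sum_le_exp_of_nonneg hx (n + 1))
  exact Finset.single_le_sum (f := fun i => x ^ i / (i ! : ℝ))
    (fun i _ => by positivity) (Finset.self_mem_range_succ n)

private lemma aux_exp_bound {a μ : ℝ} (ha : 0 < a) (hμ : 0 < μ) :
    ∃ M > 0, ∀ x ≥ (0:ℝ), Real.exp (-(a * x ^ μ)) ≤ M / (1 + x ^ 2) := by
  set n : ℕ := ⌈2 / μ⌉₊ with hn
  have hnμ : 2 ≤ (n : ℝ) * μ := by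
    have h1 : 2 / μ ≤ (n : ℝ) := Nat.le_ceil _
    calc (2:ℝ) = 2 / μ * μ := by field_simp
    _ ≤ (n : ℝ) * μ := by nlinarith
  have han : 0 < a ^ n := pow_pos ha n
  refine ⟨2 * (1 + (n ! : ℝ) / a ^ n), by positivity, fun x hx => ?_⟩
  have hE : 0 < Real.exp (a * x ^ μ) := Real.exp_pos _
  have hxμ : 0 ≤ x ^ μ := Real.rpow_nonneg hx μ
  rw [Real.exp_neg, inv_eq_one_div, div_le_div_iff₀ hE (by positivity)]
  have h1E : 1 ≤ Real.exp (a * x ^ μ) := Real.one_le_exp (by positivity)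
  have hfac : (0:ℝ) < (n ! : ℝ) := by positivity
  rcases le_or_gt x 1 with hx1 | hx1
  · nlinarith [div_nonneg hfac.le han.le]
  · -- x > 1 case
    have hkey : x ^ (2:ℝ) ≤ x ^ ((n : ℝ) * μ) :=
      Real.rpow_le_rpow_of_exponent_le hx1.le hnμ
    have h2 : x ^ (2:ℝ) = x ^ (2:ℕ) := by
      rw [← Real.rpow_natCast x 2]; norm_num
    have h3 : x ^ ((n:ℝ) * μ) = (x ^ μ) ^ n := by
      rw [← Real.rpow_natCast (x ^ μ) n, ← Real.rpow_mul hx, mul_comm]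
    have hexp : (a * x ^ μ) ^ n / (n ! : ℝ) ≤ Real.exp (a * x ^ μ) :=
      aux_pow_div_factorial_le_exp (by positivity) n
    rw [mul_pow] at hexp
    have h4 : x ^ (2:ℕ) ≤ (x ^ μ) ^ n := by rw [← h2, ← h3]; exact hkey
    have h5 : (x ^ μ) ^ n ≤ (n ! : ℝ) / a ^ n * Real.exp (a * x ^ μ) := by
      rw [div_mul_eq_mul_div, le_div_iff₀ han]
      have h := (div_le_iff₀ hfac).mp hexp
      calc (x ^ μ) ^ n * a ^ n = a ^ n * (x ^ μ) ^ n := by ring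
      _ ≤ Real.exp (a * x ^ μ) * (n ! : ℝ) := h
      _ = (n ! : ℝ) * Real.exp (a * x ^ μ) := by ring
    have hx2 : (1:ℝ) ≤ x ^ (2:ℕ) := by nlinarith
    calc 1 * (1 + x ^ 2) = 1 + x ^ 2 := one_mul _
    _ ≤ 2 * x ^ 2 := by linarith
    _ ≤ 2 * ((x ^ μ) ^ n) := mul_le_mul_of_nonneg_left h4 (by norm_num)
    _ ≤ 2 * ((n ! : ℝ) / a ^ n * Real.exp (a * x ^ μ)) :=
        mul_le_mul_of_nonneg_left h5 (by norm_num)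
    _ ≤ 2 * (1 + (n ! : ℝ) / a ^ n) * Real.exp (a * x ^ μ) := by nlinarith [h1E]

private lemma aux_int_exp {a μ : ℝ} (ha : 0 < a) (hμ : 0 < μ) :
    ∃ K > 0, ∀ t ≥ (0:ℝ),
      (∫ τ in (0:ℝ)..t, Real.exp (-(a * τ ^ μ))) ≤ K := by
  obtain ⟨M, hM0, hM⟩ := aux_exp_bound ha hμ
  have hcont1 : Continuous fun τ : ℝ => Real.exp (-(a * τ ^ μ)) :=
    Real.continuous_exp.comp ((continuous_const.mul (Real.continuous_rpow_const hμ.le)).neg)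
  have hcont2 : Continuous fun τ : ℝ => M / (1 + τ ^ 2) :=
    continuous_const.div (by continuity) (fun x => by positivity)
  refine ⟨M * (Real.pi / 2), by positivity, fun t ht => ?_⟩
  have hmono : (∫ τ in (0:ℝ)..t, Real.exp (-(a * τ ^ μ)))
      ≤ ∫ τ in (0:ℝ)..t, M / (1 + τ ^ 2) := by
    refine intervalIntegral.integral_mono_on ht (hcont1.intervalIntegrable _ _)
      (hcont2.intervalIntegrable _ _) (fun τ hτ => hM τ hτ.1)
  refine hmono.trans ?_
  have : (∫ τ in (0:ℝ)..t, M / (1 + τ ^ 2))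
      = M * ∫ τ in (0:ℝ)..t, 1 / (1 + τ ^ 2) := by
    rw [← intervalIntegral.integral_const_mul]
    congr 1; ext τ; ring
  rw [this, integral_one_div_one_add_sq, Real.arctan_zero, sub_zero]
  exact mul_le_mul_of_nonneg_left ((Real.arctan_lt_pi_div_two t).le) hM0.le

/-- Improved dispersion via exponentially weighted enstrophy
(second step of Appendix C). -/
theorem stmt_12 (σ q c μ C B : ℝ) (hσ0 : 0 < σ) (hσ1 : σ ≤ 1) (hq : 1 < q)
    (hc : 0 < c) (hμ0 : 0 < μ) (hμ1 : μ ≤ 1) (hC : 0 < C) (hB : 0 < B)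
    (D g : ℝ → ℝ) (hD_pos : ∀ t, 0 < D t) (hD_diff : Differentiable ℝ D)
    (hg_cont : Continuous g) (hg_nonneg : ∀ t, 0 ≤ g t)
    (hD' : ∀ t ≥ (0:ℝ), deriv D t ≤ C * g t * D t ^ (1 - σ))
    (hg_int : ∀ t ≥ (0:ℝ),
      (∫ τ in (0:ℝ)..t, Real.exp (c * τ ^ μ) * g τ ^ q) ≤ B * (1 + t ^ μ)) :
    ∃ C' > 0, ∀ t ≥ (0:ℝ), D t ≤ C' * (1 + t) ^ (μ / (q * σ)) := by
  have hq0 : (0:ℝ) < q := lt_trans zero_lt_one hq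
  set qc : ℝ := q / (q - 1) with hqc_def
  have hpq : q.HolderConjugate qc := Real.HolderConjugate.conjExponent hq
  have hqc0 : (0:ℝ) < qc := hpq.symm.pos
  have ha : (0:ℝ) < c * qc / q := by positivity
  set a : ℝ := c * qc / q with ha_def
  obtain ⟨K, hK0, hK⟩ := aux_int_exp ha hμ0
  -- continuity facts
  have hμcont : Continuous fun τ : ℝ => τ ^ μ := Real.continuous_rpow_const hμ0.le
  have hcont1 : Continuous fun τ : ℝ => Real.exp (-(a * τ ^ μ)) :=
    Real.continuous_exp.comp ((continuous_const.mul hμcont).neg)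
  have hcont2 : Continuous fun τ : ℝ => Real.exp (c * τ ^ μ) * g τ ^ q :=
    (Real.continuous_exp.comp (continuous_const.mul hμcont)).mul
      ((Real.continuous_rpow_const hq0.le).comp hg_cont)
  -- Step C : D t ^ σ ≤ D 0 ^ σ + σ * C * ∫ g
  have key : ∀ t ≥ (0:ℝ), D t ^ σ ≤ D 0 ^ σ + σ * C * ∫ τ in (0:ℝ)..t, g τ := by
    set E : ℝ → ℝ := fun t => D t ^ σ - σ * C * ∫ τ in (0:ℝ)..t, g τ with hE_def
    have hED : ∀ x : ℝ,
        HasDerivAt E (σ * D x ^ (σ - 1) * deriv D x - σ * C * g x) x := by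
      intro x
      have h1 : HasDerivAt (fun t => D t ^ σ) (σ * D x ^ (σ - 1) * deriv D x) x :=
        (Real.hasDerivAt_rpow_const (Or.inl (hD_pos x).ne')).comp x (hD_diff x).hasDerivAt
      have h2 : HasDerivAt (fun t => ∫ τ in (0:ℝ)..t, g τ) (g x) x :=
        intervalIntegral.integral_hasDerivAt_right (hg_cont.intervalIntegrable _ _)
          hg_cont.stronglyMeasurable.stronglyMeasurableAtFilter hg_cont.continuousAt
      exact h1.sub (h2.const_mul (σ * C))
    have hanti : AntitoneOn E (Set.Ici 0) := by
      refine antitoneOn_of_deriv_nonpos (convex_Ici 0)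
        (fun x _ => ((hED x).differentiableAt).continuousAt.continuousWithinAt)
        (fun x _ => ((hED x).differentiableAt).differentiableWithinAt) (fun x hx => ?_)
      rw [interior_Ici] at hx
      rw [(hED x).deriv]
      have hx0 : (0:ℝ) ≤ x := le_of_lt hx
      have hpow : 0 ≤ σ * D x ^ (σ - 1) := mul_nonneg hσ0.le (Real.rpow_nonneg (hD_pos x).le _)
      have h3 : σ * D x ^ (σ - 1) * deriv D x
          ≤ σ * D x ^ (σ - 1) * (C * g x * D x ^ (1 - σ)) :=
        mul_le_mul_of_nonneg_left (hD' x hx0) hpow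
      have h4 : D x ^ (σ - 1) * D x ^ (1 - σ) = 1 := by
        rw [← Real.rpow_add (hD_pos x)]; norm_num
      have h5 : σ * D x ^ (σ - 1) * (C * g x * D x ^ (1 - σ)) = σ * C * g x := by
        calc σ * D x ^ (σ - 1) * (C * g x * D x ^ (1 - σ))
            = σ * C * g x * (D x ^ (σ - 1) * D x ^ (1 - σ)) := by ring
        _ = σ * C * g x := by rw [h4, mul_one]
      linarith [h3.trans_eq h5]
    intro t ht
    have h6 := hanti (Set.self_mem_Ici) ht ht
    simp only [E, intervalIntegral.integral_same, mul_zero, sub_zero] at h6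
    linarith
  -- Step D : Young-type bound on ∫ g
  have young : ∀ t ≥ (0:ℝ),
      (∫ τ in (0:ℝ)..t, g τ) ≤ (K / qc + B / q) * (1 + t ^ μ) ^ (1 / q) := by
    intro t ht
    set L : ℝ := 1 + t ^ μ with hL_def
    have hL1 : (1:ℝ) ≤ L := by
      have : 0 ≤ t ^ μ := Real.rpow_nonneg ht μ; simp [hL_def]; linarith
    have hL0 : (0:ℝ) < L := lt_of_lt_of_le one_pos hL1
    set lam : ℝ := L ^ (1 / (q * qc)) with hlam_def
    have hlam0 : (0:ℝ) < lam := Real.rpow_pos_of_pos hL0 _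
    have hpt : ∀ τ ∈ Set.Icc (0:ℝ) t,
        g τ ≤ lam ^ (-q) / q * (Real.exp (c * τ ^ μ) * g τ ^ q)
          + lam ^ qc / qc * Real.exp (-(a * τ ^ μ)) := by
      intro τ hτ
      have hgτ := hg_nonneg τ
      have h := Real.young_inequality_of_nonneg
        (a := lam⁻¹ * (Real.exp (c / q * τ ^ μ) * g τ))
        (b := lam * Real.exp (-(c / q * τ ^ μ)))
        (mul_nonneg (inv_nonneg.mpr hlam0.le) (mul_nonneg (Real.exp_pos _).le hgτ))
        (by positivity) hpq
      have hprod : lam⁻¹ * (Real.exp (c / q * τ ^ μ) * g τ)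
          * (lam * Real.exp (-(c / q * τ ^ μ))) = g τ := by
        rw [Real.exp_neg]; field_simp
      rw [hprod] at h
      have hA : (lam⁻¹ * (Real.exp (c / q * τ ^ μ) * g τ)) ^ q
          = lam ^ (-q) * (Real.exp (c * τ ^ μ) * g τ ^ q) := by
        have hcq : c / q * τ ^ μ * q = c * τ ^ μ := by field_simp [hq0.ne']
        rw [Real.mul_rpow (by positivity) (mul_nonneg (Real.exp_pos _).le hgτ),
          Real.mul_rpow (Real.exp_pos _).le hgτ,
          Real.inv_rpow hlam0.le, ← Real.rpow_neg hlam0.le, ← Real.exp_mul, hcq]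
      have hB2 : (lam * Real.exp (-(c / q * τ ^ μ))) ^ qc
          = lam ^ qc * Real.exp (-(a * τ ^ μ)) := by
        have hcq2 : -(c / q * τ ^ μ) * qc = -(a * τ ^ μ) := by
          rw [ha_def]; field_simp [hq0.ne']
        rw [Real.mul_rpow hlam0.le (Real.exp_pos _).le, ← Real.exp_mul, hcq2]
      rw [hA, hB2] at h
      calc g τ ≤ lam ^ (-q) * (Real.exp (c * τ ^ μ) * g τ ^ q) / q
            + lam ^ qc * Real.exp (-(a * τ ^ μ)) / qc := h
      _ = lam ^ (-q) / q * (Real.exp (c * τ ^ μ) * g τ ^ q)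
            + lam ^ qc / qc * Real.exp (-(a * τ ^ μ)) := by ring
    have hint : (∫ τ in (0:ℝ)..t, g τ)
        ≤ ∫ τ in (0:ℝ)..t, (lam ^ (-q) / q * (Real.exp (c * τ ^ μ) * g τ ^ q)
            + lam ^ qc / qc * Real.exp (-(a * τ ^ μ))) := by
      refine intervalIntegral.integral_mono_on ht (hg_cont.intervalIntegrable _ _)
        (((continuous_const.mul hcont2).add (continuous_const.mul hcont1)).intervalIntegrable _ _) hpt
    rw [intervalIntegral.integral_add
      (f := fun τ => lam ^ (-q) / q * (Real.exp (c * τ ^ μ) * g τ ^ q))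
      (g := fun τ => lam ^ qc / qc * Real.exp (-(a * τ ^ μ)))
      ((continuous_const.mul hcont2).intervalIntegrable _ _)
      ((continuous_const.mul hcont1).intervalIntegrable _ _),
      intervalIntegral.integral_const_mul, intervalIntegral.integral_const_mul] at hint
    have hI1 : (∫ τ in (0:ℝ)..t, Real.exp (c * τ ^ μ) * g τ ^ q) ≤ B * L := hg_int t ht
    have hI2 : (∫ τ in (0:ℝ)..t, Real.exp (-(a * τ ^ μ))) ≤ K := hK t ht
    have hc1 : (0:ℝ) ≤ lam ^ (-q) / q := by positivity
    have hc2 : (0:ℝ) ≤ lam ^ qc / qc := by positivity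
    have hlamq : lam ^ (-q) = L ^ (-(1 / qc)) := by
      rw [hlam_def, ← Real.rpow_mul hL0.le]
      congr 1
      field_simp [hq0.ne', hqc0.ne']
    have hlamqc : lam ^ qc = L ^ (1 / q) := by
      rw [hlam_def, ← Real.rpow_mul hL0.le]
      congr 1
      field_simp [hq0.ne', hqc0.ne']
    have hcomb : lam ^ (-q) / q * (B * L) + lam ^ qc / qc * K
        = (K / qc + B / q) * L ^ (1 / q) := by
      rw [hlamq, hlamqc]
      have : L ^ (-(1 / qc)) * L = L ^ (1 / q) := by
        nth_rewrite 2 [← Real.rpow_one L]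
        rw [← Real.rpow_add hL0]
        congr 1
        have := hpq.symm.one_sub_inv
        rw [inv_eq_one_div, inv_eq_one_div] at this
        linarith
      calc L ^ (-(1 / qc)) / q * (B * L) + L ^ (1 / q) / qc * K
          = B / q * (L ^ (-(1 / qc)) * L) + K / qc * L ^ (1 / q) := by ring
      _ = B / q * L ^ (1 / q) + K / qc * L ^ (1 / q) := by rw [this]
      _ = (K / qc + B / q) * L ^ (1 / q) := by ring
    calc (∫ τ in (0:ℝ)..t, g τ)
        ≤ lam ^ (-q) / q * (∫ τ in (0:ℝ)..t, Real.exp (c * τ ^ μ) * g τ ^ q)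
          + lam ^ qc / qc * (∫ τ in (0:ℝ)..t, Real.exp (-(a * τ ^ μ))) := hint
    _ ≤ lam ^ (-q) / q * (B * L) + lam ^ qc / qc * K := by
        gcongr
    _ = (K / qc + B / q) * L ^ (1 / q) := hcomb
  -- Final assembly
  set M2 : ℝ := D 0 ^ σ + σ * C * (K / qc + B / q) with hM2_def
  have hM2pos : 0 < M2 := by
    have h0 := Real.rpow_pos_of_pos (hD_pos 0) σ
    have h1 : 0 ≤ K / qc + B / q := by positivity
    have h2 : 0 ≤ σ * C * (K / qc + B / q) := mul_nonneg (by positivity) h1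
    rw [hM2_def]; linarith
  refine ⟨M2 ^ (1 / σ) * 2 ^ (1 / (q * σ)), by positivity, fun t ht => ?_⟩
  set L : ℝ := 1 + t ^ μ with hL_def
  have hL1 : (1:ℝ) ≤ L := by
    have : 0 ≤ t ^ μ := Real.rpow_nonneg ht μ; simp [hL_def]; linarith
  have hL0 : (0:ℝ) < L := lt_of_lt_of_le one_pos hL1
  have hLq1 : (1:ℝ) ≤ L ^ (1 / q) := by
    calc (1:ℝ) = 1 ^ (1 / q) := (Real.one_rpow _).symm
    _ ≤ L ^ (1 / q) := Real.rpow_le_rpow zero_le_one hL1 (by positivity)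
  have hDσ : D t ^ σ ≤ M2 * L ^ (1 / q) := by
    have h1 := key t ht
    have h2 := young t ht
    have h3 : 0 ≤ σ * C := by positivity
    have h4 : D t ^ σ ≤ D 0 ^ σ + σ * C * ((K / qc + B / q) * L ^ (1 / q)) := by
      refine h1.trans ?_
      have := mul_le_mul_of_nonneg_left h2 h3
      linarith
    have h5 : D 0 ^ σ ≤ D 0 ^ σ * L ^ (1 / q) := by
      nlinarith [Real.rpow_pos_of_pos (hD_pos 0) σ]
    calc D t ^ σ ≤ D 0 ^ σ + σ * C * ((K / qc + B / q) * L ^ (1 / q)) := h4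
    _ ≤ D 0 ^ σ * L ^ (1 / q) + σ * C * (K / qc + B / q) * L ^ (1 / q) := by
        nlinarith
    _ = M2 * L ^ (1 / q) := by rw [hM2_def]; ring
  have hDt : D t ≤ M2 ^ (1 / σ) * L ^ (1 / (q * σ)) := by
    have h1 : D t = (D t ^ σ) ^ (1 / σ) := by
      rw [← Real.rpow_mul (hD_pos t).le, mul_one_div, div_self hσ0.ne', Real.rpow_one]
    rw [h1]
    calc (D t ^ σ) ^ (1 / σ) ≤ (M2 * L ^ (1 / q)) ^ (1 / σ) :=
        Real.rpow_le_rpow (Real.rpow_nonneg (hD_pos t).le σ) hDσ (by positivity)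
    _ = M2 ^ (1 / σ) * L ^ (1 / (q * σ)) := by
        rw [Real.mul_rpow hM2pos.le (Real.rpow_nonneg hL0.le _),
          ← Real.rpow_mul hL0.le]
        congr 2
        field_simp
  -- L ≤ 2 * (1 + t) ^ μ
  have ht1 : (0:ℝ) ≤ 1 + t := by linarith
  have hup1 : t ^ μ ≤ (1 + t) ^ μ := Real.rpow_le_rpow ht (by linarith) hμ0.le
  have hup2 : (1:ℝ) ≤ (1 + t) ^ μ := by
    calc (1:ℝ) = 1 ^ μ := (Real.one_rpow _).symm
    _ ≤ (1 + t) ^ μ := Real.rpow_le_rpow zero_le_one (by linarith) hμ0.le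
  have hL2 : L ≤ 2 * (1 + t) ^ μ := by rw [hL_def]; linarith
  have hfin : L ^ (1 / (q * σ)) ≤ 2 ^ (1 / (q * σ)) * (1 + t) ^ (μ / (q * σ)) := by
    calc L ^ (1 / (q * σ)) ≤ (2 * (1 + t) ^ μ) ^ (1 / (q * σ)) :=
        Real.rpow_le_rpow hL0.le hL2 (by positivity)
    _ = 2 ^ (1 / (q * σ)) * (1 + t) ^ (μ / (q * σ)) := by
        rw [Real.mul_rpow (by norm_num) (Real.rpow_nonneg ht1 μ),
          ← Real.rpow_mul ht1, mul_one_div]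
  calc D t ≤ M2 ^ (1 / σ) * L ^ (1 / (q * σ)) := hDt
  _ ≤ M2 ^ (1 / σ) * (2 ^ (1 / (q * σ)) * (1 + t) ^ (μ / (q * σ))) := by
      have : (0:ℝ) ≤ M2 ^ (1 / σ) := Real.rpow_nonneg hM2pos.le _
      exact mul_le_mul_of_nonneg_left hfin this
  _ = M2 ^ (1 / σ) * 2 ^ (1 / (q * σ)) * (1 + t) ^ (μ / (q * σ)) := by ring
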